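/- Let A, B, C, D be pairwise disjoint finite point sets in R^d with |A| ≤ |B| and |C| ≥ |D|. Then D(A∪B, C∪D) ≤ 3·Δ(B∪C) + 3·D(A,B) + 3·D(C,D) − Δ(B) − Δ(C). -/

import Mathlib

open Finset
open scoped Classical

noncomputable def centroid {d : ℕ} (P : Finset (EuclideanSpace ℝ (Fin d))) :
    EuclideanSpace ℝ (Fin d) :=
  (P.card : ℝ)⁻¹ • ∑ p ∈ P, p

noncomputable def Delta {d : ℕ} (P : Finset (EuclideanSpace ℝ (Fin d))) : ℝ :=
  ∑ p ∈ P, ‖p - centroid P‖ ^ 2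

noncomputable def mergeD {d : ℕ} (A B : Finset (EuclideanSpace ℝ (Fin d))) : ℝ :=
  Delta (A ∪ B) - Delta A - Delta B

lemma Delta_nonneg {d : ℕ} (P : Finset (EuclideanSpace ℝ (Fin d))) : 0 ≤ Delta P := by
  unfold Delta; positivity

lemma delta_eq {d : ℕ} (P : Finset (EuclideanSpace ℝ (Fin d))) :
    Delta P = (∑ p ∈ P, ‖p‖^2) - ‖∑ p ∈ P, p‖^2 / (P.card : ℝ) := by
  rcases P.eq_empty_or_nonempty with rfl | hP
  · simp [Delta]
  · have hn : (0:ℝ) < (P.card : ℝ) := by exact_mod_cast Finset.card_pos.mpr hP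
    have hn' : (P.card : ℝ) ≠ 0 := ne_of_gt hn
    have hkey : ∀ p ∈ P, ‖p - centroid P‖^2
        = ‖p‖^2 - 2 * (inner ℝ p (centroid P) : ℝ) + ‖centroid P‖^2 := by
      intro p _; exact norm_sub_sq_real p (centroid P)
    have h1 : (inner ℝ (∑ p ∈ P, p) (centroid P) : ℝ)
        = (P.card:ℝ)⁻¹ * ‖∑ p ∈ P, p‖^2 := by
      rw [show centroid P = ((P.card:ℝ))⁻¹ • ∑ p ∈ P, p from rfl,
        real_inner_smul_right, real_inner_self_eq_norm_sq]
    have h2 : ‖centroid P‖^2 = ((P.card:ℝ)⁻¹)^2 * ‖∑ p ∈ P, p‖^2 := by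
      rw [show centroid P = ((P.card:ℝ))⁻¹ • ∑ p ∈ P, p from rfl, norm_smul, mul_pow,
        Real.norm_eq_abs, sq_abs]
    calc Delta P = ∑ p ∈ P, (‖p‖^2 - 2*(inner ℝ p (centroid P):ℝ) + ‖centroid P‖^2) :=
          Finset.sum_congr rfl hkey
      _ = (∑ p ∈ P, ‖p‖^2) - 2*(inner ℝ (∑ p ∈ P, p) (centroid P):ℝ)
            + (P.card:ℝ)*‖centroid P‖^2 := by
          rw [Finset.sum_add_distrib, Finset.sum_sub_distrib, Finset.sum_const,
            nsmul_eq_mul, ← Finset.mul_sum, sum_inner]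
      _ = (∑ p ∈ P, ‖p‖^2) - ‖∑ p ∈ P, p‖^2 / (P.card : ℝ) := by
          rw [h1, h2]; field_simp; ring

lemma div_identity {d : ℕ} {x y : ℝ} (hx : 0 < x) (hy : 0 < y)
    (u v : EuclideanSpace ℝ (Fin d)) :
    ‖u‖^2/x + ‖v‖^2/y - ‖u+v‖^2/(x+y) = ‖y • u - x • v‖^2 / (x*y*(x+y)) := by
  have h1 : ‖u+v‖^2 = ‖u‖^2 + 2*(inner ℝ u v : ℝ) + ‖v‖^2 := norm_add_sq_real u v
  have h2 : ‖y•u - x•v‖^2 = y^2*‖u‖^2 - 2*(x*y)*(inner ℝ u v : ℝ) + x^2*‖v‖^2 := by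
    rw [norm_sub_sq_real, real_inner_smul_left, real_inner_smul_right, norm_smul, norm_smul,
      mul_pow, mul_pow, Real.norm_eq_abs, Real.norm_eq_abs, sq_abs, sq_abs]
    ring
  have hx' := hx.ne'
  have hy' := hy.ne'
  have hxy : x + y ≠ 0 := by positivity
  rw [h1, h2]; field_simp; ring

lemma mergeD_eq_div {d : ℕ} (X Y : Finset (EuclideanSpace ℝ (Fin d))) (h : Disjoint X Y)
    (hX : X.Nonempty) (hY : Y.Nonempty) :
    mergeD X Y = ‖(Y.card:ℝ) • (∑ p ∈ X, p) - (X.card:ℝ) • (∑ p ∈ Y, p)‖^2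
      / ((X.card:ℝ)*(Y.card:ℝ)*((X.card:ℝ)+(Y.card:ℝ))) := by
  have hx : (0:ℝ) < X.card := by exact_mod_cast Finset.card_pos.mpr hX
  have hy : (0:ℝ) < Y.card := by exact_mod_cast Finset.card_pos.mpr hY
  have hid := div_identity hx hy (∑ p ∈ X, p) (∑ p ∈ Y, p)
  unfold mergeD
  rw [delta_eq, delta_eq, delta_eq, Finset.sum_union h, Finset.sum_union h,
    Finset.card_union_of_disjoint h]
  push_cast
  linarith [hid]

lemma mergeD_empty_left {d : ℕ} (Y : Finset (EuclideanSpace ℝ (Fin d))) : mergeD ∅ Y = 0 := by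
  simp [mergeD, Delta, _root_.centroid]

lemma mergeD_empty_right {d : ℕ} (X : Finset (EuclideanSpace ℝ (Fin d))) : mergeD X ∅ = 0 := by
  simp [mergeD, Delta, _root_.centroid]

lemma mergeD_nonneg {d : ℕ} (X Y : Finset (EuclideanSpace ℝ (Fin d))) (h : Disjoint X Y) :
    0 ≤ mergeD X Y := by
  rcases X.eq_empty_or_nonempty with rfl | hX
  · rw [mergeD_empty_left]
  rcases Y.eq_empty_or_nonempty with rfl | hY
  · rw [mergeD_empty_right]
  rw [mergeD_eq_div X Y h hX hY]
  have hx : (0:ℝ) < X.card := by exact_mod_cast Finset.card_pos.mpr hX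
  have hy : (0:ℝ) < Y.card := by exact_mod_cast Finset.card_pos.mpr hY
  positivity

lemma core_scalar {a b c e P Q R : ℝ} (ha : 0 < a) (hab : a ≤ b) (he : 0 < e) (hec : e ≤ c) :
    (a+b)*(c+e)/(a+b+c+e) * (P+Q+R)^2 ≤
      3*((b*(a+b)/a)*P^2 + (b*c/(b+c))*Q^2 + (c*(c+e)/e)*R^2) := by
  have hb : 0 < b := lt_of_lt_of_le ha hab
  have hc : 0 < c := lt_of_lt_of_le he hec
  have hN : 0 < a+b+c+e := by linarith
  set k1 := a*(c+e)/(b*(a+b+c+e)) with hk1d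
  set k2 := (a+b)*(c+e)*(b+c)/(b*c*(a+b+c+e)) with hk2d
  set k3 := e*(a+b)/(c*(a+b+c+e)) with hk3d
  have hk1 : 0 < k1 := by rw [hk1d]; positivity
  have hk2 : 0 < k2 := by rw [hk2d]; positivity
  have hk3 : 0 < k3 := by rw [hk3d]; positivity
  have hsum : k1 + k2 + k3 ≤ 3 := by
    have hpoly : a*c*(c+e) + (a+b)*(c+e)*(b+c) + b*(e*(a+b)) ≤ 3*(b*c*(a+b+c+e)) := by
      nlinarith [mul_nonneg (mul_nonneg hb.le (by linarith : (0:ℝ) ≤ a+b))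
          (by linarith : (0:ℝ) ≤ c-e),
        mul_nonneg (mul_nonneg hc.le (by linarith : (0:ℝ) ≤ c+e))
          (by linarith : (0:ℝ) ≤ b-a)]
    have heq : k1 + k2 + k3
        = (a*c*(c+e) + (a+b)*(c+e)*(b+c) + b*(e*(a+b)))/(b*c*(a+b+c+e)) := by
      rw [hk1d, hk2d, hk3d]; field_simp
    rw [heq, div_le_iff₀ (by positivity)]; linarith
  have hcauchy : (P+Q+R)^2 ≤ (k1+k2+k3)*(P^2/k1 + Q^2/k2 + R^2/k3) := by
    have key : k1*k2*k3*(P+Q+R)^2 ≤ (k1+k2+k3)*(k2*k3*P^2 + k1*k3*Q^2 + k1*k2*R^2) := by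
      nlinarith [mul_nonneg hk3.le (sq_nonneg (k2*P - k1*Q)),
        mul_nonneg hk2.le (sq_nonneg (k3*P - k1*R)),
        mul_nonneg hk1.le (sq_nonneg (k3*Q - k2*R))]
    have h2 : P^2/k1 + Q^2/k2 + R^2/k3
        = (k2*k3*P^2 + k1*k3*Q^2 + k1*k2*R^2)/(k1*k2*k3) := by
      field_simp
    rw [h2, ← mul_div_assoc, le_div_iff₀ (by positivity)]
    nlinarith [key]
  have hKpos : (0:ℝ) ≤ (a+b)*(c+e)/(a+b+c+e) := by positivity
  have hq1 : (0:ℝ) ≤ P^2/k1 + Q^2/k2 + R^2/k3 := by positivity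
  have hstep : (a+b)*(c+e)/(a+b+c+e) * (P+Q+R)^2
      ≤ (a+b)*(c+e)/(a+b+c+e) * (3*(P^2/k1+Q^2/k2+R^2/k3)) := by
    calc (a+b)*(c+e)/(a+b+c+e) * (P+Q+R)^2
        ≤ (a+b)*(c+e)/(a+b+c+e) * ((k1+k2+k3)*(P^2/k1+Q^2/k2+R^2/k3)) :=
          mul_le_mul_of_nonneg_left hcauchy hKpos
      _ ≤ (a+b)*(c+e)/(a+b+c+e) * (3*(P^2/k1+Q^2/k2+R^2/k3)) :=
          mul_le_mul_of_nonneg_left (mul_le_mul_of_nonneg_right hsum hq1) hKpos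
  have hid : (a+b)*(c+e)/(a+b+c+e) * (3*(P^2/k1+Q^2/k2+R^2/k3))
      = 3*((b*(a+b)/a)*P^2 + (b*c/(b+c))*Q^2 + (c*(c+e)/e)*R^2) := by
    rw [hk1d, hk2d, hk3d]
    field_simp
  linarith

lemma harm_mono {x x' y y' : ℝ} (hx : 0 < x) (hxx : x ≤ x') (hy : 0 < y) (hyy : y ≤ y') :
    x*y/(x+y) ≤ x'*y'/(x'+y') := by
  have hx' : 0 < x' := lt_of_lt_of_le hx hxx
  have hy' : 0 < y' := lt_of_lt_of_le hy hyy
  rw [div_le_div_iff₀ (by positivity) (by positivity)]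
  nlinarith [mul_nonneg (mul_nonneg hx.le hx'.le) (by linarith : (0:ℝ) ≤ y' - y),
    mul_nonneg (mul_nonneg hy.le hy'.le) (by linarith : (0:ℝ) ≤ x' - x)]


lemma main_core {d : ℕ} {ra rb rc re : ℝ} {u v w z : EuclideanSpace ℝ (Fin d)}
    (hra : 0 ≤ ra) (hrb : 0 < rb) (hrc : 0 < rc) (hre : 0 ≤ re)
    (hrab : ra ≤ rb) (hrec : re ≤ rc)
    (hu0 : ra = 0 → u = 0) (hz0 : re = 0 → z = 0)
    {mAB mCD : ℝ}
    (hmAB0 : ra = 0 → mAB = 0)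
    (hmABp : 0 < ra → mAB = ‖rb • u - ra • v‖^2 / (ra*rb*(ra+rb)))
    (hmCD0 : re = 0 → mCD = 0)
    (hmCDp : 0 < re → mCD = ‖re • w - rc • z‖^2 / (rc*re*(rc+re))) :
    ‖(rc+re) • (u+v) - (ra+rb) • (w+z)‖^2 / ((ra+rb)*(rc+re)*((ra+rb)+(rc+re)))
      ≤ 3*(mAB + ‖rc • v - rb • w‖^2/(rb*rc*(rb+rc)) + mCD) := by
  have hab : 0 < ra + rb := by linarith
  have hce : 0 < rc + re := by linarith
  set p := (rb*(ra+rb))⁻¹ • (rb • u - ra • v) with hp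
  set q := (rb*rc)⁻¹ • (rc • v - rb • w) with hq
  set r := (rc*(rc+re))⁻¹ • (re • w - rc • z) with hr
  have hvec : (rc+re) • (u+v) - (ra+rb) • (w+z) = ((ra+rb)*(rc+re)) • (p+q+r) := by
    rw [hp, hq, hr]
    match_scalars <;> field_simp <;> ring
  set aa := if ra = 0 then rb else ra with haad
  set ee := if re = 0 then rc else re with heed
  have haa1 : 0 < aa := by
    rw [haad]; split_ifs with h
    · exact hrb
    · exact lt_of_le_of_ne hra (Ne.symm h)
  have haa2 : aa ≤ rb := by
    rw [haad]; split_ifs with h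
    · exact le_refl rb
    · exact hrab
  have haa3 : ra ≤ aa := by
    rw [haad]; split_ifs with h
    · rw [h]; exact hrb.le
    · exact le_refl ra
  have hee1 : 0 < ee := by
    rw [heed]; split_ifs with h
    · exact hrc
    · exact lt_of_le_of_ne hre (Ne.symm h)
  have hee2 : ee ≤ rc := by
    rw [heed]; split_ifs with h
    · exact le_refl rc
    · exact hrec
  have hee3 : re ≤ ee := by
    rw [heed]; split_ifs with h
    · rw [h]; exact hrc.le
    · exact le_refl re
  have hPAB : mAB = (rb*(aa+rb)/aa) * ‖p‖^2 := by
    rcases eq_or_lt_of_le hra with h0 | h0'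
    · have h0 : ra = 0 := h0.symm
      have hp0 : p = 0 := by rw [hp, hu0 h0, h0]; simp
      rw [hmAB0 h0, hp0]; simp
    · rw [hmABp h0', hp, norm_smul, mul_pow, Real.norm_eq_abs, sq_abs, haad, if_neg h0'.ne']
      field_simp
  have hPCD : mCD = (rc*(rc+ee)/ee) * ‖r‖^2 := by
    rcases eq_or_lt_of_le hre with h0 | h0'
    · have h0 : re = 0 := h0.symm
      have hr0 : r = 0 := by rw [hr, hz0 h0, h0]; simp
      rw [hmCD0 h0, hr0]; simp
    · rw [hmCDp h0', hr, norm_smul, mul_pow, Real.norm_eq_abs, sq_abs, heed, if_neg h0'.ne']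
      field_simp
  have hQ2 : ‖rc • v - rb • w‖^2/(rb*rc*(rb+rc)) = (rb*rc/(rb+rc)) * ‖q‖^2 := by
    rw [hq, norm_smul, mul_pow, Real.norm_eq_abs, sq_abs]
    field_simp
  have hLeq : ‖(rc+re) • (u+v) - (ra+rb) • (w+z)‖^2 / ((ra+rb)*(rc+re)*((ra+rb)+(rc+re)))
      = ((ra+rb)*(rc+re)/((ra+rb)+(rc+re))) * ‖p+q+r‖^2 := by
    rw [hvec, norm_smul, mul_pow, Real.norm_eq_abs, sq_abs]
    field_simp
  have htri : ‖p+q+r‖^2 ≤ (‖p‖+‖q‖+‖r‖)^2 :=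
    pow_le_pow_left₀ (norm_nonneg _) norm_add₃_le 2
  have hmono : (ra+rb)*(rc+re)/((ra+rb)+(rc+re)) ≤ (aa+rb)*(rc+ee)/((aa+rb)+(rc+ee)) :=
    harm_mono hab (by linarith) hce (by linarith)
  have hcore := core_scalar (P := ‖p‖) (Q := ‖q‖) (R := ‖r‖) haa1 haa2 hee1 hee2
  have hassoc : aa+rb+rc+ee = (aa+rb)+(rc+ee) := by ring
  rw [hassoc] at hcore
  have hK1 : (0:ℝ) ≤ (ra+rb)*(rc+re)/((ra+rb)+(rc+re)) := by positivity
  have step1 : ((ra+rb)*(rc+re)/((ra+rb)+(rc+re))) * ‖p+q+r‖^2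
      ≤ ((ra+rb)*(rc+re)/((ra+rb)+(rc+re))) * (‖p‖+‖q‖+‖r‖)^2 :=
    mul_le_mul_of_nonneg_left htri hK1
  have step2 : ((ra+rb)*(rc+re)/((ra+rb)+(rc+re))) * (‖p‖+‖q‖+‖r‖)^2
      ≤ ((aa+rb)*(rc+ee)/((aa+rb)+(rc+ee))) * (‖p‖+‖q‖+‖r‖)^2 :=
    mul_le_mul_of_nonneg_right hmono (sq_nonneg _)
  rw [hLeq]
  linarith [hcore, step1, step2]


theorem mergeD_union_four_bound {d : ℕ} (A B C D : Finset (EuclideanSpace ℝ (Fin d)))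
    (hAB : Disjoint A B) (hAC : Disjoint A C) (hAD : Disjoint A D)
    (hBC : Disjoint B C) (hBD : Disjoint B D) (hCD : Disjoint C D)
    (hcardAB : A.card ≤ B.card) (hcardCD : D.card ≤ C.card) :
    mergeD (A ∪ B) (C ∪ D) ≤
      3 * Delta (B ∪ C) + 3 * mergeD A B + 3 * mergeD C D - Delta B - Delta C := by
  classical
  have hRHS : 3 * Delta (B ∪ C) + 3 * mergeD A B + 3 * mergeD C D - Delta B - Delta C
      = 2*Delta B + 2*Delta C + 3*mergeD B C + 3*mergeD A B + 3*mergeD C D := by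
    unfold mergeD; ring
  have hDe : Delta (∅ : Finset (EuclideanSpace ℝ (Fin d))) = 0 := by simp [Delta]
  rcases B.eq_empty_or_nonempty with hB | hBne
  · have hA : A = ∅ := by
      have h1 : A.card = 0 := by rw [hB] at hcardAB; simpa using hcardAB
      exact Finset.card_eq_zero.mp h1
    rw [hA, hB, Finset.empty_union, Finset.empty_union, mergeD_empty_left, mergeD_empty_left,
      hDe]
    linarith [Delta_nonneg C, mergeD_nonneg C D hCD]
  rcases C.eq_empty_or_nonempty with hC | hCne
  · have hD : D = ∅ := by
      have h1 : D.card = 0 := by rw [hC] at hcardCD; simpa using hcardCD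
      exact Finset.card_eq_zero.mp h1
    rw [hC, hD, Finset.union_empty, Finset.union_empty, mergeD_empty_right, mergeD_empty_right,
      hDe]
    linarith [Delta_nonneg B, mergeD_nonneg A B hAB]
  -- main case
  have hU : Disjoint (A ∪ B) (C ∪ D) := by
    rw [Finset.disjoint_union_left]
    exact ⟨Finset.disjoint_union_right.mpr ⟨hAC, hAD⟩,
      Finset.disjoint_union_right.mpr ⟨hBC, hBD⟩⟩
  have hABne : (A ∪ B).Nonempty := ⟨hBne.choose, Finset.mem_union_right _ hBne.choose_spec⟩
  have hCDne : (C ∪ D).Nonempty := ⟨hCne.choose, Finset.mem_union_left _ hCne.choose_spec⟩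
  have hra : (0:ℝ) ≤ A.card := by positivity
  have hrb : (0:ℝ) < B.card := by exact_mod_cast Finset.card_pos.mpr hBne
  have hrc : (0:ℝ) < C.card := by exact_mod_cast Finset.card_pos.mpr hCne
  have hre : (0:ℝ) ≤ D.card := by positivity
  have hrab : (A.card:ℝ) ≤ B.card := by exact_mod_cast hcardAB
  have hrec : (D.card:ℝ) ≤ C.card := by exact_mod_cast hcardCD
  have hu0 : (A.card:ℝ) = 0 → (∑ x ∈ A, x) = 0 := by
    intro h
    have : A = ∅ := Finset.card_eq_zero.mp (by exact_mod_cast h)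
    simp [this]
  have hz0 : (D.card:ℝ) = 0 → (∑ x ∈ D, x) = 0 := by
    intro h
    have : D = ∅ := Finset.card_eq_zero.mp (by exact_mod_cast h)
    simp [this]
  have hmAB0 : (A.card:ℝ) = 0 → mergeD A B = 0 := by
    intro h
    have : A = ∅ := Finset.card_eq_zero.mp (by exact_mod_cast h)
    rw [this, mergeD_empty_left]
  have hmABp : (0:ℝ) < A.card → mergeD A B
      = ‖(B.card:ℝ) • (∑ x ∈ A, x) - (A.card:ℝ) • (∑ x ∈ B, x)‖^2
        / ((A.card:ℝ)*(B.card:ℝ)*((A.card:ℝ)+(B.card:ℝ))) := by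
    intro h
    exact mergeD_eq_div A B hAB (Finset.card_pos.mp (by exact_mod_cast h)) hBne
  have hmCD0 : (D.card:ℝ) = 0 → mergeD C D = 0 := by
    intro h
    have : D = ∅ := Finset.card_eq_zero.mp (by exact_mod_cast h)
    rw [this, mergeD_empty_right]
  have hmCDp : (0:ℝ) < D.card → mergeD C D
      = ‖(D.card:ℝ) • (∑ x ∈ C, x) - (C.card:ℝ) • (∑ x ∈ D, x)‖^2
        / ((C.card:ℝ)*(D.card:ℝ)*((C.card:ℝ)+(D.card:ℝ))) := by
    intro h
    exact mergeD_eq_div C D hCD hCne (Finset.card_pos.mp (by exact_mod_cast h))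
  have hmain := main_core hra hrb hrc hre hrab hrec hu0 hz0 hmAB0 hmABp hmCD0 hmCDp
  have hLdiv := mergeD_eq_div (A ∪ B) (C ∪ D) hU hABne hCDne
  have hc1 : (((A ∪ B)).card : ℝ) = (A.card:ℝ) + (B.card:ℝ) := by
    rw [Finset.card_union_of_disjoint hAB]; push_cast; ring
  have hc2 : (((C ∪ D)).card : ℝ) = (C.card:ℝ) + (D.card:ℝ) := by
    rw [Finset.card_union_of_disjoint hCD]; push_cast; ring
  rw [hc1, hc2, Finset.sum_union hAB, Finset.sum_union hCD] at hLdiv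
  have hM := mergeD_eq_div B C hBC hBne hCne
  rw [← hLdiv, ← hM] at hmain
  rw [hRHS]
  linarith [hmain, Delta_nonneg B, Delta_nonneg C]
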